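/- Let F be a field, n ≥ 1, and let Λ ∈ F^{n×n} be a non-derogatory Jordan matrix, i.e. Λ has diagonal entries d_1,…,d_n, superdiagonal entries s_1,…,s_{n−1} ∈ {0,1}, all other entries zero, where s_i = 1 implies d_i = d_{i+1} (each Jordan block has a constant diagonal), and whenever i ≤ j and d_i = d_j one has s_k = 1 for all i ≤ k < j (equal eigenvalues occur only within a single block, so every eigenvalue has geometric multiplicity 1). Then both (Λ, 𝟙_n) and (Λᵀ, 𝟙_n) are controllable, where 𝟙_n is the all-ones vector. -/

import Mathlib

open Matrix Polynomial

/-- A pair `(X, p)` is controllable if `p, Xp, …, X^{n−1}p` span the whole space. -/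
def Controllable {F : Type*} [Field F] {n : ℕ} (X : Matrix (Fin n) (Fin n) F)
    (p : Fin n → F) : Prop :=
  Submodule.span F (Set.range fun i : Fin n => (X ^ (i : ℕ)) *ᵥ p) = ⊤

theorem core_controllable {F : Type*} [Field F] {n : ℕ} (hn : 1 ≤ n)
    (Λ : Matrix (Fin n) (Fin n) F)
    (hzero : ∀ i j : Fin n, (j : ℕ) ≠ (i : ℕ) → (j : ℕ) ≠ (i : ℕ) + 1 → Λ i j = 0)
    (hsuper : ∀ i j : Fin n, (j : ℕ) = (i : ℕ) + 1 → Λ i j = 0 ∨ Λ i j = 1)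
    (hblock : ∀ i j : Fin n, (j : ℕ) = (i : ℕ) + 1 → Λ i j = 1 → Λ i i = Λ j j)
    (hnonderog : ∀ i j : Fin n, i ≤ j → Λ i i = Λ j j →
      ∀ k l : Fin n, i ≤ k → (l : ℕ) = (k : ℕ) + 1 → l ≤ j → Λ k l = 1) :
    Controllable Λ (fun _ => (1 : F)) := by
  classical
  by_contra hC
  rw [Controllable] at hC
  set one : Fin n → F := fun _ => (1 : F) with hone
  set S : Submodule F (Fin n → F) :=
    Submodule.span F (Set.range fun i : Fin n => (Λ ^ (i : ℕ)) *ᵥ one) with hS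
  obtain ⟨φ, hφne, hφ⟩ := Submodule.exists_dual_map_eq_bot_of_lt_top
    (p := S) (lt_top_iff_ne_top.2 hC) inferInstance
  have hφ0 : ∀ x ∈ S, φ x = 0 := by
    intro x hx
    have : φ x ∈ S.map φ := Submodule.mem_map_of_mem hx
    rwa [hφ, Submodule.mem_bot] at this
  set w : Fin n → F := fun j => φ (fun k => if j = k then 1 else 0) with hw
  have hrep : ∀ x, φ x = w ⬝ᵥ x := by
    intro x
    rw [LinearMap.pi_apply_eq_sum_univ φ x]
    simp [dotProduct, w, mul_comm, smul_eq_mul]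
  have hwne : w ≠ 0 := by
    intro h
    exact hφne (LinearMap.ext fun x => by rw [hrep x, h]; simp)
  have hw0 : ∀ k : ℕ, k < n → w ⬝ᵥ ((Λ ^ k) *ᵥ one) = 0 := by
    intro k hk
    rw [← hrep]
    exact hφ0 _ (Submodule.subset_span ⟨⟨k, hk⟩, rfl⟩)
  -- extend to all powers via Cayley–Hamilton
  have hwall : ∀ k : ℕ, w ⬝ᵥ ((Λ ^ k) *ᵥ one) = 0 := by
    intro k
    have hms : Λ.charpoly.Monic := Λ.charpoly_monic
    have hne1 : Λ.charpoly ≠ 1 := by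
      intro h
      have := Λ.charpoly_natDegree_eq_dim
      rw [h] at this
      simp [Fintype.card_fin] at this
      omega
    have hdeg : (X ^ k %ₘ Λ.charpoly).natDegree < n := by
      have := Polynomial.natDegree_modByMonic_lt (X ^ k) hms hne1
      rwa [Λ.charpoly_natDegree_eq_dim, Fintype.card_fin] at this
    have hpow : Λ ^ k = aeval Λ (X ^ k %ₘ Λ.charpoly) := by
      have h1 : aeval Λ (X ^ k : Polynomial F) = Λ ^ k := by simp
      rw [← h1]
      conv_lhs => rw [← Polynomial.modByMonic_add_div (X ^ k : Polynomial F) Λ.charpoly]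
      rw [map_add, _root_.map_mul, Matrix.aeval_self_charpoly, zero_mul, add_zero]
    rw [hpow, Polynomial.aeval_eq_sum_range' hdeg]
    have hsum : (∑ i ∈ Finset.range n, (X ^ k %ₘ Λ.charpoly).coeff i • Λ ^ i) *ᵥ one
        = ∑ i ∈ Finset.range n, (X ^ k %ₘ Λ.charpoly).coeff i • ((Λ ^ i) *ᵥ one) := by
      rw [← Matrix.toLin'_apply, map_sum, LinearMap.sum_apply]
      refine Finset.sum_congr rfl fun i _ => ?_
      rw [_root_.map_smul, LinearMap.smul_apply, Matrix.toLin'_apply]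
    have hdot : w ⬝ᵥ (∑ i ∈ Finset.range n,
        (X ^ k %ₘ Λ.charpoly).coeff i • ((Λ ^ i) *ᵥ one))
        = ∑ i ∈ Finset.range n, (X ^ k %ₘ Λ.charpoly).coeff i • (w ⬝ᵥ ((Λ ^ i) *ᵥ one)) := by
      simp only [dotProduct, Finset.sum_apply, Finset.mul_sum, Pi.smul_apply, smul_eq_mul,
        Finset.smul_sum]
      rw [Finset.sum_comm]
      refine Finset.sum_congr rfl fun i _ => Finset.sum_congr rfl fun j _ => by ring
    rw [hsum, hdot]
    exact Finset.sum_eq_zero fun i hi => by rw [hw0 i (Finset.mem_range.1 hi), smul_zero]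
  -- the list of commuting factors of the characteristic polynomial
  set d : Fin n → F := fun i => Λ i i with hd
  set f : Fin n → Matrix (Fin n) (Fin n) F := fun i => Λᵀ - d i • (1 : Matrix (Fin n) (Fin n) F)
    with hf
  set l : List (Matrix (Fin n) (Fin n) F) := (List.finRange n).map f with hl
  have hcp : Λ.charpoly = ∏ i : Fin n, (X - C (d i)) := by
    apply Matrix.charpoly_of_upperTriangular
    intro i j hij
    simp only [id_eq] at hij
    exact hzero _ _ (by omega) (by omega)
  have hcpT : Λᵀ.charpoly = Λ.charpoly := by
    rw [Matrix.charpoly, Matrix.charpoly]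
    rw [show Λᵀ.charmatrix = Λ.charmatrixᵀ by
      ext i j
      simp [Matrix.charmatrix_apply, Matrix.transpose_apply, Matrix.diagonal_apply]
      by_cases h : i = j <;> simp [h, eq_comm]]
    rw [Matrix.det_transpose]
  have hprod : l.prod = 0 := by
    have h0 : aeval Λᵀ Λᵀ.charpoly = 0 := Matrix.aeval_self_charpoly Λᵀ
    rw [hcpT, hcp, Fin.prod_univ_def, map_list_prod] at h0
    rw [← h0, hl, List.map_map]
    congr 1
    apply List.map_congr_left
    intro i _
    simp [hf, Algebra.algebraMap_eq_smul_one, sub_eq_add_neg]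
  set u : ℕ → (Fin n → F) := fun k => (l.drop k).prod *ᵥ w with hu
  have hlen : l.length = n := by simp [hl]
  have hu0 : u 0 = 0 := by simp [hu, hprod]
  have hun : u n ≠ 0 := by
    have : l.drop n = [] := List.drop_eq_nil_of_le (by omega)
    simpa [hu, this] using hwne
  have hustep : ∀ k : ℕ, ∀ hk : k < n,
      u k = f ⟨k, hk⟩ *ᵥ u (k + 1) := by
    intro k hk
    have hk' : k < l.length := by omega
    have hdp : (l.drop k).prod = f ⟨k, hk⟩ * (l.drop (k + 1)).prod := by
      conv_lhs => rw [List.drop_eq_getElem_cons hk']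
      rw [List.prod_cons]
      congr 1
      simp [hl]
    simp only [hu]
    rw [hdp, ← Matrix.mulVec_mulVec]
  have hex : ∀ m : ℕ, m ≤ n → u m ≠ 0 → ∃ k, ∃ hk : k < n, u k = 0 ∧ u (k + 1) ≠ 0 := by
    intro m
    induction m with
    | zero => intro _ hm; exact absurd hu0 hm
    | succ m ih =>
      intro hmn hm
      by_cases h : u m = 0
      · exact ⟨m, by omega, h, hm⟩
      · exact ih (by omega) h
  obtain ⟨k, hkn, hk0, hkne⟩ := hex n le_rfl hun
  set i₀ : Fin n := ⟨k, hkn⟩ with hi₀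
  set v : Fin n → F := u (k + 1) with hv
  have heig : Λᵀ *ᵥ v = d i₀ • v := by
    have := (hustep k hkn).symm.trans hk0
    rw [hf] at this
    simp only [Matrix.sub_mulVec, Matrix.smul_mulVec, Matrix.one_mulVec] at this
    rw [← sub_eq_zero]
    exact this
  have hvW : ∀ m : ℕ, v ⬝ᵥ ((Λ ^ m) *ᵥ one) = 0 := by
    have key : ∀ t : List (Fin n), ∀ m : ℕ, ((t.map f).prod *ᵥ w) ⬝ᵥ ((Λ ^ m) *ᵥ one) = 0 := by
      intro t
      induction t with
      | nil => simpa using hwall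
      | cons a t ih =>
        intro m
        rw [List.map_cons, List.prod_cons, ← Matrix.mulVec_mulVec, hf]
        set y := (t.map f).prod *ᵥ w with hy
        have hy1 : (Λᵀ *ᵥ y) ⬝ᵥ ((Λ ^ m) *ᵥ one) = y ⬝ᵥ ((Λ ^ (m + 1)) *ᵥ one) := by
          rw [pow_succ', ← Matrix.mulVec_mulVec, Matrix.mulVec_transpose,
            ← Matrix.dotProduct_mulVec]
        simp only [Matrix.sub_mulVec, Matrix.smul_mulVec, Matrix.one_mulVec,
          sub_dotProduct, smul_dotProduct]
        rw [hy1, ih (m + 1), ih m, smul_zero, sub_zero]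
    have hvt : v = (((List.finRange n).drop (k + 1)).map f).prod *ᵥ w := by
      simp only [hv, hu, hl, List.map_drop]
    intro m
    rw [hvt]
    exact key _ m
  have hvne : v ≠ 0 := hkne
  have hsumv : ∑ j, v j = 0 := by
    have := hvW 0
    simpa [dotProduct, one] using this
  have heigcol : ∀ j : Fin n, ∑ i, Λ i j * v i = d i₀ * v j := by
    intro j
    have := congrFun heig j
    simp only [Matrix.mulVec, dotProduct, Matrix.transpose_apply, Pi.smul_apply,
      smul_eq_mul] at this
    exact this
  -- column equation for the first column
  have hcol0 : ∀ j : Fin n, (j : ℕ) = 0 → d i₀ * v j = Λ j j * v j := by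
    intro j hj
    rw [← heigcol j]
    apply Finset.sum_eq_single_of_mem j (Finset.mem_univ j)
    intro i _ hij
    have hne : (j : ℕ) ≠ (i : ℕ) := fun h => hij (Fin.ext h.symm)
    rw [hzero i j hne (by omega), zero_mul]
  -- column equation for subsequent columns
  have hcolS : ∀ (m : ℕ) (hm : m + 1 < n),
      d i₀ * v ⟨m + 1, hm⟩ =
        Λ ⟨m + 1, hm⟩ ⟨m + 1, hm⟩ * v ⟨m + 1, hm⟩
          + Λ ⟨m, by omega⟩ ⟨m + 1, hm⟩ * v ⟨m, by omega⟩ := by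
    intro m hm
    rw [← heigcol ⟨m + 1, hm⟩]
    have hne : (⟨m + 1, hm⟩ : Fin n) ≠ ⟨m, by omega⟩ := by
      intro h
      have := Fin.mk.injEq .. ▸ h
      simp at this
    apply Finset.sum_eq_add_of_mem _ _ (Finset.mem_univ _) (Finset.mem_univ _) hne
    intro i _ hi
    have h1 : (⟨m + 1, hm⟩ : Fin n) ≠ i := fun h => hi.1 h.symm
    have h2 : ((⟨m + 1, hm⟩ : Fin n) : ℕ) ≠ (i : ℕ) := fun h => h1 (Fin.ext h)
    have h3 : ((⟨m + 1, hm⟩ : Fin n) : ℕ) ≠ (i : ℕ) + 1 := by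
      intro h
      apply hi.2
      apply Fin.ext
      simp only [Fin.val_mk] at h ⊢
      omega
    rw [hzero i _ h2 h3, zero_mul]
  -- the maximal index with diagonal entry equal to the eigenvalue
  set B : Finset (Fin n) := Finset.univ.filter (fun j => Λ j j = d i₀) with hB
  have hi₀B : i₀ ∈ B := by simp [hB, hd]
  have hBne : B.Nonempty := ⟨i₀, hi₀B⟩
  set b : Fin n := B.max' hBne with hb
  have hbB : Λ b b = d i₀ := by
    have := B.max'_mem hBne
    simp only [hB, Finset.mem_filter] at this
    exact this.2
  have hble : ∀ j : Fin n, Λ j j = d i₀ → j ≤ b := by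
    intro j hj
    exact B.le_max' j (by simp [hB, hj])
  -- every entry of v except possibly the b-th vanishes
  have key : ∀ m : ℕ, ∀ hm : m < n, (⟨m, hm⟩ : Fin n) ≠ b → v ⟨m, hm⟩ = 0 := by
    intro m
    induction m using Nat.strong_induction_on with
    | _ m ih =>
      intro hm hne
      by_cases hcase : Λ ⟨m, hm⟩ ⟨m, hm⟩ = d i₀
      · -- inside the block of the eigenvalue, strictly before its end
        have hjb : (⟨m, hm⟩ : Fin n) < b := lt_of_le_of_ne (hble _ hcase) hne
        have hmb : m < (b : ℕ) := hjb
        have hm1 : m + 1 < n := by have := b.isLt; omega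
        have hs : Λ ⟨m, hm⟩ ⟨m + 1, hm1⟩ = 1 := by
          apply hnonderog ⟨m, hm⟩ b (le_of_lt hjb) (hcase.trans hbB.symm) ⟨m, hm⟩ ⟨m + 1, hm1⟩
            le_rfl rfl
          show m + 1 ≤ (b : ℕ)
          omega
        have hd1 : Λ ⟨m + 1, hm1⟩ ⟨m + 1, hm1⟩ = d i₀ := by
          rw [← hblock ⟨m, hm⟩ ⟨m + 1, hm1⟩ rfl hs]
          exact hcase
        have hc := hcolS m hm1
        rw [hd1, hs, one_mul] at hc
        linear_combination -hc
      · -- outside the block of the eigenvalue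
        have hsub : (d i₀ - Λ ⟨m, hm⟩ ⟨m, hm⟩) ≠ 0 := sub_ne_zero.2 (Ne.symm hcase)
        rcases Nat.eq_zero_or_pos m with hm0 | hmpos
        · subst hm0
          have hc := hcol0 ⟨0, hm⟩ rfl
          have : (d i₀ - Λ ⟨0, hm⟩ ⟨0, hm⟩) * v ⟨0, hm⟩ = 0 := by linear_combination hc
          exact (mul_eq_zero.1 this).resolve_left hsub
        · obtain ⟨m', rfl⟩ : ∃ m', m = m' + 1 := ⟨m - 1, by omega⟩
          have hm' : m' < n := by omega
          have hc := hcolS m' hm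
          have hvm' : Λ ⟨m', by omega⟩ ⟨m' + 1, hm⟩ * v ⟨m', by omega⟩ = 0 := by
            by_cases hbm : (⟨m', hm'⟩ : Fin n) = b
            · rcases hsuper ⟨m', hm'⟩ ⟨m' + 1, hm⟩ rfl with h0 | h1
              · rw [h0, zero_mul]
              · exfalso
                apply hcase
                rw [← hblock ⟨m', hm'⟩ ⟨m' + 1, hm⟩ rfl h1, hbm]
                exact hbB
            · rw [ih m' (by omega) hm' hbm, mul_zero]
          rw [hvm'] at hc
          have : (d i₀ - Λ ⟨m' + 1, hm⟩ ⟨m' + 1, hm⟩) * v ⟨m' + 1, hm⟩ = 0 := by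
            linear_combination hc
          exact (mul_eq_zero.1 this).resolve_left hsub
  have hvb : v b = 0 := by
    rw [← hsumv]
    symm
    apply Finset.sum_eq_single_of_mem b (Finset.mem_univ b)
    intro i _ hib
    have := key (i : ℕ) i.isLt (by simpa [Fin.eta] using hib)
    simpa [Fin.eta] using this
  apply hvne
  funext j
  by_cases hjb : j = b
  · rw [hjb, hvb]; rfl
  · have := key (j : ℕ) j.isLt (by simpa [Fin.eta] using hjb)
    simpa [Fin.eta] using this

theorem controllable_of_submatrix {F : Type*} [Field F] {n : ℕ}
    (A : Matrix (Fin n) (Fin n) F) (e : Fin n ≃ Fin n)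
    (h : Controllable (A.submatrix e e) (fun _ => (1 : F))) :
    Controllable A (fun _ => (1 : F)) := by
  classical
  have hpow : ∀ k : ℕ, (A.submatrix e e) ^ k = (A ^ k).submatrix e e := by
    intro k
    induction k with
    | zero => simp [Matrix.submatrix_one_equiv]
    | succ k ih => rw [pow_succ, pow_succ, ih, Matrix.submatrix_mul_equiv]
  have hmv : ∀ k : ℕ, ((A.submatrix e e) ^ k) *ᵥ (fun _ => (1 : F))
      = ((A ^ k) *ᵥ (fun _ => (1 : F))) ∘ e := by
    intro k
    rw [hpow, Matrix.submatrix_mulVec_equiv]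
    rfl
  rw [Controllable] at h ⊢
  rw [← top_le_iff]
  intro x _
  set L : (Fin n → F) ≃ₗ[F] (Fin n → F) := LinearEquiv.funCongrLeft F F e with hL
  have hx : L x ∈ Submodule.span F
      (Set.range fun i : Fin n => ((A.submatrix e e) ^ (i : ℕ)) *ᵥ fun _ => (1 : F)) := by
    rw [h]; trivial
  have hrange : (Set.range fun i : Fin n => ((A.submatrix e e) ^ (i : ℕ)) *ᵥ fun _ => (1 : F))
      = L '' (Set.range fun i : Fin n => (A ^ (i : ℕ)) *ᵥ fun _ => (1 : F)) := by
    rw [← Set.range_comp]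
    refine congrArg _ (funext fun i => ?_)
    simp only [Function.comp_apply, hmv]
    rfl
  rw [hrange, Submodule.span_image_linearEquiv] at hx
  obtain ⟨y, hy, hyx⟩ := hx
  have : y = x := by
    have := congrArg L.symm hyx
    simpa using this
  exact this ▸ hy

theorem nonderogatory_jordan_controllable' {F : Type*} [Field F] {n : ℕ} (hn : 1 ≤ n)
    (Λ : Matrix (Fin n) (Fin n) F)
    (hzero : ∀ i j : Fin n, (j : ℕ) ≠ (i : ℕ) → (j : ℕ) ≠ (i : ℕ) + 1 → Λ i j = 0)
    (hsuper : ∀ i j : Fin n, (j : ℕ) = (i : ℕ) + 1 → Λ i j = 0 ∨ Λ i j = 1)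
    (hblock : ∀ i j : Fin n, (j : ℕ) = (i : ℕ) + 1 → Λ i j = 1 → Λ i i = Λ j j)
    (hnonderog : ∀ i j : Fin n, i ≤ j → Λ i i = Λ j j →
      ∀ k l : Fin n, i ≤ k → (l : ℕ) = (k : ℕ) + 1 → l ≤ j → Λ k l = 1) :
    Controllable Λ (fun _ => (1 : F)) ∧ Controllable Λᵀ (fun _ => (1 : F)) := by
  constructor
  · exact core_controllable hn Λ hzero hsuper hblock hnonderog
  · apply controllable_of_submatrix Λᵀ Fin.revPerm
    set A : Matrix (Fin n) (Fin n) F := (Λᵀ).submatrix Fin.revPerm Fin.revPerm with hA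
    have hAe : ∀ i j : Fin n, A i j = Λ j.rev i.rev := by
      intro i j
      simp [hA, Matrix.submatrix_apply, Matrix.transpose_apply]
    apply core_controllable hn A
    · intro i j h1 h2
      rw [hAe]
      have hi := i.isLt
      have hj := j.isLt
      have hri := Fin.val_rev i
      have hrj := Fin.val_rev j
      exact hzero j.rev i.rev (by omega) (by omega)
    · intro i j h1
      rw [hAe]
      have hi := i.isLt
      have hj := j.isLt
      have hri := Fin.val_rev i
      have hrj := Fin.val_rev j
      exact hsuper j.rev i.rev (by omega)
    · intro i j h1 h2
      rw [hAe i i, hAe j j]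
      rw [hAe] at h2
      have hi := i.isLt
      have hj := j.isLt
      have hri := Fin.val_rev i
      have hrj := Fin.val_rev j
      exact (hblock j.rev i.rev (by omega) h2).symm
    · intro i j hij hd k l hik hl hlj
      rw [hAe]
      rw [hAe i i, hAe j j] at hd
      have hi := i.isLt
      have hj := j.isLt
      have hk := k.isLt
      have hl' := l.isLt
      have hri := Fin.val_rev i
      have hrj := Fin.val_rev j
      have hrk := Fin.val_rev k
      have hrl := Fin.val_rev l
      rw [Fin.le_def] at hij hik hlj
      exact hnonderog j.rev i.rev (by rw [Fin.le_def]; omega) hd.symm l.rev k.rev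
        (by rw [Fin.le_def]; omega) (by omega) (by rw [Fin.le_def]; omega)

/-- If `Λ` is a non-derogatory Jordan matrix over a field `F`, then both `(Λ, 𝟙)` and
`(Λᵀ, 𝟙)` are controllable, where `𝟙` is the all-ones vector. -/
theorem nonderogatory_jordan_controllable {F : Type*} [Field F] {n : ℕ} (hn : 1 ≤ n)
    (Λ : Matrix (Fin n) (Fin n) F)
    -- all entries off the diagonal and superdiagonal vanish
    (hzero : ∀ i j : Fin n, (j : ℕ) ≠ (i : ℕ) → (j : ℕ) ≠ (i : ℕ) + 1 → Λ i j = 0)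
    -- superdiagonal entries are 0 or 1
    (hsuper : ∀ i j : Fin n, (j : ℕ) = (i : ℕ) + 1 → Λ i j = 0 ∨ Λ i j = 1)
    -- each Jordan block has a constant diagonal: s_i = 1 implies d_i = d_{i+1}
    (hblock : ∀ i j : Fin n, (j : ℕ) = (i : ℕ) + 1 → Λ i j = 1 → Λ i i = Λ j j)
    -- equal eigenvalues occur only within a single block: if i ≤ j and d_i = d_j then
    -- s_k = 1 for all i ≤ k < j
    (hnonderog : ∀ i j : Fin n, i ≤ j → Λ i i = Λ j j →
      ∀ k l : Fin n, i ≤ k → (l : ℕ) = (k : ℕ) + 1 → l ≤ j → Λ k l = 1) :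
    Controllable Λ (fun _ => (1 : F)) ∧ Controllable Λᵀ (fun _ => (1 : F)) := by
  exact nonderogatory_jordan_controllable' hn Λ hzero hsuper hblock hnonderog
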